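/- Let d ≥ 3, δ = ⌊d/2⌋, and let n ≥ d be an integer. Let g_0, …, g_δ be integers with g_0 = 1 and g_i ≥ C(d,i) − C(d,i−1) for all 1 ≤ i ≤ δ, and define f_j = Σ_{i=0}^{δ} g_i·m_{i,j} for 0 ≤ j ≤ d−1. Let gCS_0 = 1, gCS_1 = 2n−d−1, and gCS_i = C(d,i) − C(d,i−1) for 2 ≤ i ≤ δ, and define fCS_j = Σ_{i=0}^{δ} gCS_i·m_{i,j}. If fCS_r ≤ f_r for some integer r with 0 ≤ r ≤ d−2, then fCS_s ≤ f_s for every integer s with r < s ≤ d−1. -/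

import Mathlib

/-- The entry `m_{i,j} = C(d+1-i, d-j) - C(i, d-j)` of the matrix `M_d`. -/
def mMat (d i j : ℕ) : ℤ :=
  ((d + 1 - i).choose (d - j) : ℤ) - (i.choose (d - j) : ℤ)

/-- The g-vector of the centrally-symmetric stacked polytope `CS(2n,d)`:
`gCS_0 = 1`, `gCS_1 = 2n-d-1`, and `gCS_i = C(d,i) - C(d,i-1)` for `i ≥ 2`. -/
def gCSStacked (n d i : ℕ) : ℤ :=
  if i = 0 then 1
  else if i = 1 then 2 * (n : ℤ) - d - 1
  else (d.choose i : ℤ) - (d.choose (i - 1) : ℤ)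

lemma choose_id_int (n t : ℕ) :
    ((t : ℤ) + 1) * (n.choose (t + 1) : ℤ) = ((n : ℤ) - t) * (n.choose t : ℤ) := by
  rcases le_or_gt (t + 1) n with h | h
  · have h1 := Nat.choose_succ_right_eq n t
    have h2 : ((n.choose (t + 1) * (t + 1) : ℕ) : ℤ) = ((n.choose t * (n - t) : ℕ) : ℤ) := by
      rw [h1]
    have ht : t ≤ n := by omega
    push_cast [ht] at h2
    linarith
  · rw [Nat.choose_eq_zero_of_lt h]
    rcases eq_or_lt_of_le (Nat.lt_succ_iff.mp h) with he | hl
    · subst he; simp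
    · rw [Nat.choose_eq_zero_of_lt hl]; simp

lemma choose_ratio (i A t : ℕ) (hi : 2 ≤ i) (hiA : i ≤ A) (ht : 2 ≤ t) :
    ((A : ℤ) - 1) * (i.choose t : ℤ) ≤ ((i : ℤ) - 1) * (A.choose t : ℤ) := by
  rcases le_or_gt t i with hti | hti
  · induction A, hiA using Nat.le_induction with
    | base => exact le_refl _
    | succ A hA ih =>
      have hcast : ((A.choose t : ℤ)) * ((A : ℤ) + 1) =
          ((A + 1).choose t : ℤ) * ((A : ℤ) + 1 - t) := by
        have h0 := Nat.choose_mul_succ_eq A t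
        have h2 : ((A.choose t * (A + 1) : ℕ) : ℤ)
            = (((A + 1).choose t * (A + 1 - t) : ℕ) : ℤ) := by rw [h0]
        have htA : t ≤ A + 1 := by omega
        push_cast [htA] at h2
        linarith
      have hApos : (0 : ℤ) < (A : ℤ) + 1 - t := by
        have : t ≤ A := hti.trans hA
        have : (t : ℤ) ≤ A := by exact_mod_cast this
        linarith
      have hc0 : (0 : ℤ) ≤ (i.choose t : ℤ) := by positivity
      have h1 : ((A : ℤ) - 1) * (i.choose t : ℤ) * ((A : ℤ) + 1) ≤
          ((i : ℤ) - 1) * (A.choose t : ℤ) * ((A : ℤ) + 1) :=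
        mul_le_mul_of_nonneg_right ih (by positivity)
      have hA2 : (2 : ℤ) ≤ (A : ℤ) := by exact_mod_cast hi.trans hA
      have ht2 : (2 : ℤ) ≤ (t : ℤ) := by exact_mod_cast ht
      have h3 : (A : ℤ) * ((A : ℤ) + 1 - t) ≤ ((A : ℤ) - 1) * ((A : ℤ) + 1) := by nlinarith
      have h4 : ((A : ℤ)) * (i.choose t : ℤ) * ((A : ℤ) + 1 - t) ≤
          ((i : ℤ) - 1) * ((A + 1).choose t : ℤ) * ((A : ℤ) + 1 - t) := by
        calc ((A : ℤ)) * (i.choose t : ℤ) * ((A : ℤ) + 1 - t)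
            = (i.choose t : ℤ) * ((A : ℤ) * ((A : ℤ) + 1 - t)) := by ring
          _ ≤ (i.choose t : ℤ) * (((A : ℤ) - 1) * ((A : ℤ) + 1)) :=
              mul_le_mul_of_nonneg_left h3 hc0
          _ = ((A : ℤ) - 1) * (i.choose t : ℤ) * ((A : ℤ) + 1) := by ring
          _ ≤ ((i : ℤ) - 1) * (A.choose t : ℤ) * ((A : ℤ) + 1) := h1
          _ = ((i : ℤ) - 1) * ((A.choose t : ℤ) * ((A : ℤ) + 1)) := by ring
          _ = ((i : ℤ) - 1) * ((A + 1).choose t : ℤ) * ((A : ℤ) + 1 - t) := by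
              rw [hcast]; ring
      have h5 := le_of_mul_le_mul_right h4 hApos
      push_cast
      linarith
  · have hz : i.choose t = 0 := Nat.choose_eq_zero_of_lt hti
    rw [hz]
    have hi1 : (1 : ℤ) ≤ (i : ℤ) := by exact_mod_cast Nat.one_le_of_lt hi
    have : (0 : ℤ) ≤ ((i : ℤ) - 1) * (A.choose t : ℤ) :=
      mul_nonneg (by linarith) (by positivity)
    simpa using this

lemma mMat_nonneg (d i j : ℕ) (hi : 2 * i ≤ d + 1) : 0 ≤ mMat d i j := by
  unfold mMat
  have h : i.choose (d - j) ≤ (d + 1 - i).choose (d - j) :=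
    Nat.choose_le_choose _ (by omega)
  exact sub_nonneg.mpr (by exact_mod_cast h)

lemma mMat_one_pos (d j : ℕ) (hd : 3 ≤ d) (hj : j ≤ d - 2) : 0 < mMat d 1 j := by
  unfold mMat
  have h1 : (1 : ℕ).choose (d - j) = 0 := Nat.choose_eq_zero_of_lt (by omega)
  have h3 : d + 1 - 1 = d := by omega
  rw [h3, h1]
  have h2 : 0 < d.choose (d - j) := Nat.choose_pos (by omega)
  simpa using (by exact_mod_cast h2 : (0 : ℤ) < (d.choose (d - j) : ℤ))

lemma mMat_ratio (d i j : ℕ) (hd : 3 ≤ d) (hi2 : 2 ≤ i) (hi : 2 * i ≤ d)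
    (hj : j + 1 ≤ d - 1) :
    mMat d i j * mMat d 1 (j + 1) ≤ mMat d i (j + 1) * mMat d 1 j := by
  obtain ⟨A, hA⟩ : ∃ A, d + 1 - i = A := ⟨_, rfl⟩
  obtain ⟨t, htdef⟩ : ∃ t, d - (j + 1) = t := ⟨_, rfl⟩
  have hdj : d - j = t + 1 := by omega
  have ht1 : 1 ≤ t := by omega
  have hiA : i ≤ A := by omega
  have hAd : (d : ℤ) = (A : ℤ) + i - 1 := by
    have h1 : d = A + i - 1 := by omega
    have h2 : 1 ≤ A + i := by omega
    omega
  have hd1 : d + 1 - 1 = d := by omega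
  have hc11 : ((1 : ℕ).choose (t + 1) : ℤ) = 0 := by
    rw [Nat.choose_eq_zero_of_lt (by omega)]; simp
  have eA := choose_id_int A t
  have ei := choose_id_int i t
  have ed := choose_id_int d t
  have hkey : 0 ≤ ((i : ℤ) - 1) * (A.choose t : ℤ) * (d.choose t : ℤ)
      - ((A : ℤ) - 1) * (i.choose t : ℤ) * (d.choose t : ℤ)
      + ((A : ℤ) - t) * (A.choose t : ℤ) * ((1 : ℕ).choose t : ℤ)
      - ((i : ℤ) - t) * (i.choose t : ℤ) * ((1 : ℕ).choose t : ℤ) := by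
    rcases eq_or_lt_of_le ht1 with hteq | ht2
    · subst htdef
      rw [← hteq]
      simp only [Nat.choose_one_right, Nat.choose_self]
      have : ((i : ℤ) - 1) * A * d - ((A : ℤ) - 1) * i * d
          + ((A : ℤ) - 1) * A * 1 - ((i : ℤ) - 1) * i * 1 = 0 := by
        linear_combination ((i : ℤ) - (A : ℤ)) * hAd
      push_cast
      linarith [this]
    · have hc10 : ((1 : ℕ).choose t : ℤ) = 0 := by
        rw [Nat.choose_eq_zero_of_lt (by omega)]; simp
      rw [hc10]
      have hr := choose_ratio i A t hi2 hiA (by omega)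
      have hcd0 : (0 : ℤ) ≤ (d.choose t : ℤ) := by positivity
      nlinarith [mul_le_mul_of_nonneg_right hr hcd0]
  unfold mMat
  rw [hdj, htdef, hA, hd1, hc11]
  have hfinal :
      ((t : ℤ) + 1) * (((A.choose t : ℤ) - (i.choose t : ℤ)) * ((d.choose (t + 1) : ℤ) - 0))
      - ((t : ℤ) + 1) * (((A.choose (t + 1) : ℤ) - (i.choose (t + 1) : ℤ)) *
          ((d.choose t : ℤ) - ((1 : ℕ).choose t : ℤ)))
      = ((i : ℤ) - 1) * (A.choose t : ℤ) * (d.choose t : ℤ)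
      - ((A : ℤ) - 1) * (i.choose t : ℤ) * (d.choose t : ℤ)
      + ((A : ℤ) - t) * (A.choose t : ℤ) * ((1 : ℕ).choose t : ℤ)
      - ((i : ℤ) - t) * (i.choose t : ℤ) * ((1 : ℕ).choose t : ℤ) := by
    linear_combination ((A.choose t : ℤ) - (i.choose t : ℤ)) * ed
      - ((d.choose t : ℤ) - ((1 : ℕ).choose t : ℤ)) * eA
      + ((d.choose t : ℤ) - ((1 : ℕ).choose t : ℤ)) * ei
      + ((A.choose t : ℤ) * (d.choose t : ℤ) - (i.choose t : ℤ) * (d.choose t : ℤ)) * hAd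
  have ht0 : (0 : ℤ) < (t : ℤ) + 1 := by positivity
  have h6 : ((t : ℤ) + 1) * (((A.choose (t + 1) : ℤ) - (i.choose (t + 1) : ℤ)) *
        ((d.choose t : ℤ) - ((1 : ℕ).choose t : ℤ)))
      ≤ ((t : ℤ) + 1) * (((A.choose t : ℤ) - (i.choose t : ℤ)) *
        ((d.choose (t + 1) : ℤ) - 0)) := by linarith [hkey, hfinal]
  exact le_of_mul_le_mul_left h6 ht0

lemma cs_step (d n : ℕ) (hd : 3 ≤ d) (hn : d ≤ n) (g : ℕ → ℤ)
    (hg0 : g 0 = 1)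
    (hg : ∀ i, 1 ≤ i → i ≤ d / 2 → (d.choose i : ℤ) - (d.choose (i - 1) : ℤ) ≤ g i)
    (j : ℕ) (hj : j + 1 ≤ d - 1)
    (h : ∑ i ∈ Finset.range (d / 2 + 1), gCSStacked n d i * mMat d i j ≤
         ∑ i ∈ Finset.range (d / 2 + 1), g i * mMat d i j) :
    ∑ i ∈ Finset.range (d / 2 + 1), gCSStacked n d i * mMat d i (j + 1) ≤
    ∑ i ∈ Finset.range (d / 2 + 1), g i * mMat d i (j + 1) := by
  have hS : 0 ≤ ∑ i ∈ Finset.range (d / 2 + 1), (g i - gCSStacked n d i) * mMat d i j := by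
    simp only [sub_mul, Finset.sum_sub_distrib]
    linarith
  have key : (∑ i ∈ Finset.range (d / 2 + 1), (g i - gCSStacked n d i) * mMat d i j)
        * mMat d 1 (j + 1)
      ≤ (∑ i ∈ Finset.range (d / 2 + 1), (g i - gCSStacked n d i) * mMat d i (j + 1))
        * mMat d 1 j := by
    rw [Finset.sum_mul, Finset.sum_mul]
    apply Finset.sum_le_sum
    intro i hi
    rw [Finset.mem_range] at hi
    rcases Nat.lt_or_ge i 2 with hi2 | hi2
    · interval_cases i
      · simp [hg0, gCSStacked]
      · have : g 1 - gCSStacked n d 1 = g 1 - gCSStacked n d 1 := rfl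
        calc (g 1 - gCSStacked n d 1) * mMat d 1 j * mMat d 1 (j + 1)
            = (g 1 - gCSStacked n d 1) * mMat d 1 (j + 1) * mMat d 1 j := by ring
          _ ≤ (g 1 - gCSStacked n d 1) * mMat d 1 (j + 1) * mMat d 1 j := le_refl _
    · have hgi : 0 ≤ g i - gCSStacked n d i := by
        have h1 := hg i (by omega) (by omega)
        have h2 : gCSStacked n d i = (d.choose i : ℤ) - (d.choose (i - 1) : ℤ) := by
          unfold gCSStacked
          rw [if_neg (by omega), if_neg (by omega)]
        rw [h2]; linarith
      have hrat := mMat_ratio d i j hd hi2 (by omega) hj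
      calc (g i - gCSStacked n d i) * mMat d i j * mMat d 1 (j + 1)
          = (g i - gCSStacked n d i) * (mMat d i j * mMat d 1 (j + 1)) := by ring
        _ ≤ (g i - gCSStacked n d i) * (mMat d i (j + 1) * mMat d 1 j) :=
            mul_le_mul_of_nonneg_left hrat hgi
        _ = (g i - gCSStacked n d i) * mMat d i (j + 1) * mMat d 1 j := by ring
  have h0 : 0 ≤ (∑ i ∈ Finset.range (d / 2 + 1), (g i - gCSStacked n d i) * mMat d i j)
      * mMat d 1 (j + 1) :=
    mul_nonneg hS (mMat_nonneg d 1 (j + 1) (by omega))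
  have h1 : 0 ≤ (∑ i ∈ Finset.range (d / 2 + 1), (g i - gCSStacked n d i) * mMat d i (j + 1))
      * mMat d 1 j := le_trans h0 key
  have hpos : 0 < mMat d 1 j := mMat_one_pos d j hd (by omega)
  have h2 : 0 ≤ ∑ i ∈ Finset.range (d / 2 + 1), (g i - gCSStacked n d i) * mMat d i (j + 1) :=
    nonneg_of_mul_nonneg_right (by linarith [h1] ; ) hpos
  simp only [sub_mul, Finset.sum_sub_distrib] at h2
  linarith

/-- Centrally-symmetric lower bounds: if `g_0 = 1` and `g_i ≥ C(d,i) - C(d,i-1)` for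
`1 ≤ i ≤ ⌊d/2⌋`, `f = g·M_d`, and `fCS = gCS·M_d` is the f-vector of the
centrally-symmetric stacked polytope `CS(2n,d)`, then `fCS_r ≤ f_r` for some `r ≤ d-2`
implies `fCS_s ≤ f_s` for all `r < s ≤ d-1`. -/
theorem cs_lower_bounds (d n : ℕ) (hd : 3 ≤ d) (hn : d ≤ n) (g : ℕ → ℤ)
    (hg0 : g 0 = 1)
    (hg : ∀ i, 1 ≤ i → i ≤ d / 2 → (d.choose i : ℤ) - (d.choose (i - 1) : ℤ) ≤ g i)
    (r : ℕ) (hr : r ≤ d - 2)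
    (hfr : ∑ i ∈ Finset.range (d / 2 + 1), gCSStacked n d i * mMat d i r ≤
           ∑ i ∈ Finset.range (d / 2 + 1), g i * mMat d i r) :
    ∀ s, r < s → s ≤ d - 1 →
      ∑ i ∈ Finset.range (d / 2 + 1), gCSStacked n d i * mMat d i s ≤
        ∑ i ∈ Finset.range (d / 2 + 1), g i * mMat d i s := by
  intro s hs1 hs2
  induction s with
  | zero => omega
  | succ s ih =>
    rcases Nat.lt_or_ge r s with hrs | hrs
    · exact cs_step d n hd hn g hg0 hg s (by omega) (ih hrs (by omega))
    · have : r = s := by omega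
      subst this
      exact cs_step d n hd hn g hg0 hg r (by omega) hfr
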